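/- The space of (m-a.e. equivalence classes of) measurable sections Γ(T) of a measurable Banach bundle T over X, equipped with pointwise operations, the pointwise norm |s|(x) = n(s(x)), and the distance d(s_1,s_2) = ∫ |s_1−s_2| ∧ 1 dm', is a proper L^0(m)-normed L^0(m)-module whose dimensional decomposition is given by the partition (E_n) of the bundle; in particular the constant sections e_1,…,e_n of the canonical basis of ℝ^n form a local basis of Γ(T) on E_n. -/

import Mathlib

open MeasureTheory Filter

namespace L0SerreSwan

/-- A measurable Banach bundle over `(X,d,m)`: a Borel partition `(E_n)_{n∈ℕ}` of `X`,
with total space `⊔ₙ Eₙ × ℝⁿ`, together with a measurable function `nrm` assigning to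
`m`-a.e. point `x ∈ E_n` a norm `nrm n x ·` on the fiber `ℝⁿ`. -/
structure MBB (X : Type*) [MeasurableSpace X] (μ : MeasureTheory.Measure X) where
  E : ℕ → Set X
  measE : ∀ n, MeasurableSet (E n)
  disjE : ∀ n m, n ≠ m → Disjoint (E n) (E m)
  unionE : (⋃ n, E n) = Set.univ
  nrm : (n : ℕ) → X → (Fin n → ℝ) → ℝ
  meas_nrm : ∀ n, Measurable (fun p : X × (Fin n → ℝ) => nrm n p.1 p.2)
  nrm_nonneg : ∀ n, ∀ᵐ x ∂μ, x ∈ E n → ∀ v, 0 ≤ nrm n x v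
  nrm_definite : ∀ n, ∀ᵐ x ∂μ, x ∈ E n → ∀ v, nrm n x v = 0 → v = 0
  nrm_smul : ∀ n, ∀ᵐ x ∂μ, x ∈ E n → ∀ (c : ℝ) (v), nrm n x (c • v) = |c| * nrm n x v
  nrm_triangle : ∀ n, ∀ᵐ x ∂μ, x ∈ E n → ∀ v w, nrm n x (v + w) ≤ nrm n x v + nrm n x w

variable {X : Type*} [MeasurableSpace X] {μ : MeasureTheory.Measure X}

/-- A measurable section of a measurable Banach bundle, recorded by its values
`val n x ∈ ℝⁿ` (only the values for `x ∈ E_n` are relevant). -/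
structure Sec (B : MBB X μ) where
  val : (n : ℕ) → X → Fin n → ℝ
  meas : ∀ n, Measurable (val n)

/-- Two sections agree `m`-a.e. (fiberwise, on each piece of the partition). -/
def Sec.aeeq (B : MBB X μ) (s t : Sec B) : Prop :=
  ∀ n, ∀ᵐ x ∂μ, x ∈ B.E n → s.val n x = t.val n x

/-- Pointwise sum of sections. -/
def Sec.add {B : MBB X μ} (s t : Sec B) : Sec B :=
  ⟨fun n x i => s.val n x i + t.val n x i, fun n =>
    measurable_pi_lambda _ fun i =>
      ((measurable_pi_apply i).comp (s.meas n)).add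
        ((measurable_pi_apply i).comp (t.meas n))⟩

/-- Pointwise difference of sections. -/
def Sec.sub {B : MBB X μ} (s t : Sec B) : Sec B :=
  ⟨fun n x i => s.val n x i - t.val n x i, fun n =>
    measurable_pi_lambda _ fun i =>
      ((measurable_pi_apply i).comp (s.meas n)).sub
        ((measurable_pi_apply i).comp (t.meas n))⟩

/-- Multiplication of a section by a (Borel representative of an) `L⁰` function. -/
def Sec.smul {B : MBB X μ} (g : X → ℝ) (hg : Measurable g) (s : Sec B) : Sec B :=
  ⟨fun n x i => g x * s.val n x i, fun n =>
    measurable_pi_lambda _ fun i =>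
      hg.mul ((measurable_pi_apply i).comp (s.meas n))⟩

/-- The pointwise norm `|s|(x) = nrm(s(x))` of a section. -/
noncomputable def ptNorm (B : MBB X μ) (s : Sec B) : X → ℝ :=
  fun x => ∑' n, (B.E n).indicator (fun y => B.nrm n y (s.val n y)) x

/-- The distance `d(s,t) = ∫ |s-t| ∧ 1 dm'` on sections. -/
noncomputable def secDist (B : MBB X μ) (m' : MeasureTheory.Measure X) (s t : Sec B) : ℝ :=
  ∫ x, min (ptNorm B (s.sub t) x) 1 ∂m'

/-- The constant section associated to a vector `q ∈ ℝⁿ`: it equals `q` on `E_n` and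
vanishes on the other pieces of the partition. -/
def constSec (B : MBB X μ) (n : ℕ) (q : Fin n → ℝ) : Sec B :=
  ⟨fun k _x i => if h : k = n then q (Fin.cast h i) else 0,
   fun _k => measurable_const⟩

/-- A finite `L⁰`-linear combination `∑ᵢ gᵢ • uᵢ` of sections. -/
def lincomb {B : MBB X μ} {k : ℕ} (g : Fin k → X → ℝ) (hg : ∀ i, Measurable (g i))
    (u : Fin k → Sec B) : Sec B :=
  ⟨fun n x j => ∑ i, g i x * (u i).val n x j, fun n =>
    measurable_pi_lambda _ fun j =>
      Finset.measurable_sum _ fun i _ =>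
        (hg i).mul ((measurable_pi_apply j).comp ((u i).meas n))⟩

/-! ### Auxiliary lemmas -/

lemma MBB.exists_mem (B : MBB X μ) (x : X) : ∃ n, x ∈ B.E n := by
  have : x ∈ ⋃ n, B.E n := B.unionE ▸ Set.mem_univ x
  simpa using this

lemma MBB.mem_unique (B : MBB X μ) {n m : ℕ} {x : X} (hx : x ∈ B.E n) (hx' : x ∈ B.E m) :
    n = m := by
  by_contra h
  exact Set.disjoint_left.mp (B.disjE n m h) hx hx'

lemma ptNorm_eq (B : MBB X μ) (s : Sec B) {n : ℕ} {x : X} (hx : x ∈ B.E n) :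
    ptNorm B s x = B.nrm n x (s.val n x) := by
  have h : ∀ m, m ≠ n → (B.E m).indicator (fun y => B.nrm m y (s.val m y)) x = 0 := by
    intro m hm
    exact Set.indicator_of_notMem (fun hxm => hm (B.mem_unique hxm hx)) _
  rw [ptNorm, tsum_eq_single n h, Set.indicator_of_mem hx]

lemma measurable_nrm_val (B : MBB X μ) (s : Sec B) (n : ℕ) :
    Measurable fun x => B.nrm n x (s.val n x) :=
  (B.meas_nrm n).comp (measurable_id.prodMk (s.meas n))

lemma measurable_ptNorm (B : MBB X μ) (s : Sec B) : Measurable (ptNorm B s) := by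
  intro A hA
  have key : ptNorm B s ⁻¹' A = ⋃ n, B.E n ∩ ((fun x => B.nrm n x (s.val n x)) ⁻¹' A) := by
    ext x
    obtain ⟨n, hn⟩ := B.exists_mem x
    simp only [Set.mem_preimage, Set.mem_iUnion, Set.mem_inter_iff]
    constructor
    · intro h; exact ⟨n, hn, by rwa [← ptNorm_eq B s hn]⟩
    · rintro ⟨m, hm, h⟩; rwa [ptNorm_eq B s hm]
  rw [key]
  exact MeasurableSet.iUnion fun n => (B.measE n).inter (measurable_nrm_val B s n hA)

/-- The point `x` is "good" in fiber `n`: `nrm n x` is a genuine norm on `ℝⁿ`. -/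
def GoodAt (B : MBB X μ) (n : ℕ) (x : X) : Prop :=
  (∀ v, 0 ≤ B.nrm n x v) ∧ (∀ v, B.nrm n x v = 0 → v = 0) ∧
  (∀ (c : ℝ) (v), B.nrm n x (c • v) = |c| * B.nrm n x v) ∧
  (∀ v w, B.nrm n x (v + w) ≤ B.nrm n x v + B.nrm n x w)

lemma ae_good (B : MBB X μ) : ∀ᵐ x ∂μ, ∀ n, x ∈ B.E n → GoodAt B n x := by
  rw [ae_all_iff]
  intro n
  filter_upwards [B.nrm_nonneg n, B.nrm_definite n, B.nrm_smul n, B.nrm_triangle n] with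
    x h1 h2 h3 h4 hx
  exact ⟨h1 hx, h2 hx, h3 hx, h4 hx⟩

lemma GoodAt.nrm_zero {B : MBB X μ} {n : ℕ} {x : X} (h : GoodAt B n x) : B.nrm n x 0 = 0 := by
  have := h.2.2.1 0 0
  simpa using this

lemma GoodAt.nrm_sum_le {B : MBB X μ} {n : ℕ} {x : X} (h : GoodAt B n x) {ι : Type*}
    (t : Finset ι) (f : ι → Fin n → ℝ) :
    B.nrm n x (∑ i ∈ t, f i) ≤ ∑ i ∈ t, B.nrm n x (f i) := by
  classical
  induction t using Finset.induction with
  | empty => simp [h.nrm_zero]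
  | insert _ _ hi ih =>
    rw [Finset.sum_insert hi, Finset.sum_insert hi]
    exact le_trans (h.2.2.2 _ _) (by linarith)

lemma GoodAt.le_C {B : MBB X μ} {n : ℕ} {x : X} (h : GoodAt B n x) (v : Fin n → ℝ) :
    B.nrm n x v ≤ (∑ i : Fin n, B.nrm n x (Pi.single i 1)) * ‖v‖ := by
  have hv : v = ∑ i : Fin n, v i • (Pi.single i (1 : ℝ) : Fin n → ℝ) := by
    funext j
    simp [Finset.sum_apply, Pi.single_apply, mul_ite]
  have h1 : B.nrm n x v ≤ ∑ i : Fin n, B.nrm n x (v i • (Pi.single i (1 : ℝ) : Fin n → ℝ)) := by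
    conv_lhs => rw [hv]
    exact h.nrm_sum_le _ _
  refine h1.trans ?_
  rw [Finset.sum_mul]
  refine Finset.sum_le_sum fun i _ => ?_
  rw [h.2.2.1]
  have ha : |v i| ≤ ‖v‖ := by simpa using norm_le_pi_norm v i
  have hb : 0 ≤ B.nrm n x (Pi.single i 1) := h.1 _
  calc |v i| * B.nrm n x (Pi.single i 1) ≤ ‖v‖ * B.nrm n x (Pi.single i 1) :=
        mul_le_mul_of_nonneg_right ha hb
    _ = B.nrm n x (Pi.single i 1) * ‖v‖ := mul_comm _ _

lemma GoodAt.nrm_neg {B : MBB X μ} {n : ℕ} {x : X} (h : GoodAt B n x) (v : Fin n → ℝ) :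
    B.nrm n x (-v) = B.nrm n x v := by
  have := h.2.2.1 (-1) v
  simpa using this

lemma GoodAt.abs_sub_le {B : MBB X μ} {n : ℕ} {x : X} (h : GoodAt B n x) (v w : Fin n → ℝ) :
    |B.nrm n x v - B.nrm n x w| ≤ B.nrm n x (v - w) := by
  have hsym : B.nrm n x (w - v) = B.nrm n x (v - w) := by
    rw [← neg_sub v w, h.nrm_neg]
  rw [abs_sub_le_iff]
  constructor
  · have := h.2.2.2 (v - w) w
    rw [sub_add_cancel] at this
    linarith
  · have := h.2.2.2 (w - v) v
    rw [sub_add_cancel] at this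
    linarith

lemma GoodAt.continuous {B : MBB X μ} {n : ℕ} {x : X} (h : GoodAt B n x) :
    Continuous (B.nrm n x) := by
  set C : ℝ := ∑ i : Fin n, B.nrm n x (Pi.single i 1) with hC
  have hC0 : 0 ≤ C := Finset.sum_nonneg fun i _ => h.1 _
  refine (LipschitzWith.of_dist_le_mul (K := ⟨C, hC0⟩) fun a b => ?_).continuous
  calc dist (B.nrm n x a) (B.nrm n x b) = |B.nrm n x a - B.nrm n x b| := Real.dist_eq _ _
    _ ≤ B.nrm n x (a - b) := h.abs_sub_le a b
    _ ≤ C * ‖a - b‖ := h.le_C _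
    _ = (⟨C, hC0⟩ : NNReal) * dist a b := by rw [dist_eq_norm]

lemma GoodAt.lower {B : MBB X μ} {n : ℕ} {x : X} (h : GoodAt B n x) :
    ∃ c : ℝ, 0 < c ∧ ∀ v, c * ‖v‖ ≤ B.nrm n x v := by
  rcases Nat.eq_zero_or_pos n with hn | hn
  · refine ⟨1, one_pos, fun v => ?_⟩
    subst hn
    have hv : v = 0 := Subsingleton.elim _ _
    rw [hv, h.nrm_zero]
    simp
  · haveI : Nonempty (Fin n) := ⟨⟨0, hn⟩⟩
    have hne : (Metric.sphere (0 : Fin n → ℝ) 1).Nonempty :=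
      NormedSpace.sphere_nonempty.mpr zero_le_one
    obtain ⟨v₀, hv₀, hmin⟩ :=
      (isCompact_sphere (0 : Fin n → ℝ) 1).exists_isMinOn hne h.continuous.continuousOn
    have hv₀norm : ‖v₀‖ = 1 := by simpa using hv₀
    have hv₀ne : v₀ ≠ 0 := by
      intro h0
      rw [h0] at hv₀norm
      simp at hv₀norm
    have hc : 0 < B.nrm n x v₀ :=
      lt_of_le_of_ne (h.1 v₀) fun he => hv₀ne (h.2.1 v₀ he.symm)
    refine ⟨B.nrm n x v₀, hc, fun v => ?_⟩
    rcases eq_or_ne v 0 with rfl | hv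
    · simp [h.nrm_zero]
    · have hnv : 0 < ‖v‖ := norm_pos_iff.mpr hv
      have hw : ‖v‖⁻¹ • v ∈ Metric.sphere (0 : Fin n → ℝ) 1 := by
        simp [norm_smul, abs_of_pos (inv_pos.mpr hnv), inv_mul_cancel₀ hnv.ne']
      have hmin' := isMinOn_iff.mp hmin _ hw
      have heq : B.nrm n x (‖v‖⁻¹ • v) = ‖v‖⁻¹ * B.nrm n x v := by
        rw [h.2.2.1, abs_of_pos (inv_pos.mpr hnv)]
      rw [heq] at hmin'
      calc B.nrm n x v₀ * ‖v‖ ≤ (‖v‖⁻¹ * B.nrm n x v) * ‖v‖ :=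
            mul_le_mul_of_nonneg_right hmin' hnv.le
        _ = B.nrm n x v := by field_simp

lemma ae_ptNorm_nonneg (B : MBB X μ) (s : Sec B) : ∀ᵐ x ∂μ, 0 ≤ ptNorm B s x := by
  filter_upwards [ae_good B] with x hx
  obtain ⟨n, hn⟩ := B.exists_mem x
  rw [ptNorm_eq B s hn]
  exact (hx n hn).1 _

lemma min_one_add_min_one {a b c : ℝ} (ha : 0 ≤ a) (hb : 0 ≤ b) (hc : c ≤ a + b) :
    min c 1 ≤ min a 1 + min b 1 := by
  have hma : 0 ≤ min a 1 := le_min ha zero_le_one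
  have hmb : 0 ≤ min b 1 := le_min hb zero_le_one
  by_cases h1 : 1 ≤ a
  · have : min a 1 = 1 := min_eq_right h1
    have := min_le_right c 1
    linarith
  by_cases h2 : 1 ≤ b
  · have : min b 1 = 1 := min_eq_right h2
    have := min_le_right c 1
    linarith
  push_neg at h1 h2
  rw [min_eq_left h1.le, min_eq_left h2.le]
  exact le_trans (min_le_left c 1) hc

/-- **The section space is a proper normed module.** For a measurable Banach bundle `T`
over a metric measure space `(X,d,m)` and a probability measure `m'` with `m ≪ m' ≪ m`,
the space of `m`-a.e. equivalence classes of measurable sections, with pointwise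
operations, pointwise norm `|s|(x) = n(s(x))` and distance `d(s,t) = ∫ |s-t| ∧ 1 dm'`,
is a proper `L⁰(m)`-normed `L⁰(m)`-module: `d` is a complete distance on a.e.-classes,
the pointwise norm is nonnegative and `L⁰`-homogeneous, and its dimensional decomposition
is the partition `(E_n)` of the bundle — the constant sections of the canonical basis
vectors of `ℝⁿ` form a local basis on `E_n`. -/
theorem sections_form_proper_normed_module
    {X : Type*} [MetricSpace X] [CompleteSpace X] [SecondCountableTopology X]
    [MeasurableSpace X] [BorelSpace X]
    (μ : Measure X) [IsLocallyFiniteMeasure μ] (hμ : μ ≠ 0)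
    (m' : Measure X) [IsProbabilityMeasure m'] (h₁ : μ ≪ m') (h₂ : m' ≪ μ)
    (B : MBB X μ) :
    -- `secDist` is a distance on a.e.-equivalence classes of sections
    (∀ s t : Sec B, secDist B m' s t = secDist B m' t s) ∧
    (∀ s t u : Sec B, secDist B m' s u ≤ secDist B m' s t + secDist B m' t u) ∧
    (∀ s t : Sec B, secDist B m' s t = 0 ↔ Sec.aeeq B s t) ∧
    -- completeness
    (∀ u : ℕ → Sec B,
      (∀ ε > (0:ℝ), ∃ N, ∀ p ≥ N, ∀ q ≥ N, secDist B m' (u p) (u q) < ε) →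
      ∃ s : Sec B, Tendsto (fun k => secDist B m' (u k) s) atTop (nhds 0)) ∧
    -- pointwise-norm axioms of a normed module
    (∀ s : Sec B, ∀ᵐ x ∂μ, 0 ≤ ptNorm B s x) ∧
    (∀ (g : X → ℝ) (hg : Measurable g) (s : Sec B),
      (fun x => ptNorm B (Sec.smul g hg s) x) =ᵐ[μ] fun x => |g x| * ptNorm B s x) ∧
    -- the partition `(E_n)` is a dimensional decomposition: the constant sections of the
    -- canonical basis vectors generate on `E_n` and are independent on `E_n`
    (∀ n : ℕ,
      (∀ s : Sec B, ∀ᵐ x ∂μ, x ∈ B.E n →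
        s.val n x =
          ∑ i : Fin n, s.val n x i • (constSec B n (Pi.single i (1:ℝ))).val n x) ∧
      (∀ g : Fin n → X → ℝ, (∀ i, Measurable (g i)) →
        (∀ᵐ x ∂μ, x ∈ B.E n →
          (∑ i : Fin n, g i x • (constSec B n (Pi.single i (1:ℝ))).val n x) = 0) →
        ∀ᵐ x ∂μ, x ∈ B.E n → ∀ i, g i x = 0)) := by
  classical
  -- transfer of a.e. statements between μ and m'
  have aeμ : ∀ {P : X → Prop}, (∀ᵐ x ∂m', P x) → ∀ᵐ x ∂μ, P x := fun h => h₁.ae_le h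
  have aem' : ∀ {P : X → Prop}, (∀ᵐ x ∂μ, P x) → ∀ᵐ x ∂m', P x := fun h => h₂.ae_le h
  have meas_min : ∀ s : Sec B, Measurable fun x => min (ptNorm B s x) 1 := fun s =>
    (measurable_ptNorm B s).min measurable_const
  have nonneg_min : ∀ s : Sec B, ∀ᵐ x ∂m', 0 ≤ min (ptNorm B s x) 1 := by
    intro s
    filter_upwards [aem' (ae_ptNorm_nonneg B s)] with x hx
    exact le_min hx zero_le_one
  have int_min : ∀ s : Sec B, Integrable (fun x => min (ptNorm B s x) 1) m' := by
    intro s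
    refine Integrable.mono' (integrable_const 1) (meas_min s).aestronglyMeasurable ?_
    filter_upwards [nonneg_min s] with x hx
    rw [Real.norm_eq_abs, abs_of_nonneg hx]
    exact min_le_right _ _
  have secDist_nonneg : ∀ s t : Sec B, 0 ≤ secDist B m' s t := fun s t =>
    integral_nonneg_of_ae (nonneg_min (s.sub t))
  -- symmetry
  have hsymm : ∀ s t : Sec B, secDist B m' s t = secDist B m' t s := by
    intro s t
    refine integral_congr_ae ?_
    filter_upwards [aem' (ae_good B)] with x hx
    obtain ⟨n, hn⟩ := B.exists_mem x
    rw [ptNorm_eq _ _ hn, ptNorm_eq _ _ hn]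
    have hval : (s.sub t).val n x = -((t.sub s).val n x) := by
      funext i; simp [Sec.sub]
    rw [hval, (hx n hn).nrm_neg]
  -- triangle inequality
  have htri : ∀ s t u : Sec B,
      secDist B m' s u ≤ secDist B m' s t + secDist B m' t u := by
    intro s t u
    have hae : ∀ᵐ x ∂m',
        min (ptNorm B (s.sub u) x) 1
          ≤ min (ptNorm B (s.sub t) x) 1 + min (ptNorm B (t.sub u) x) 1 := by
      filter_upwards [aem' (ae_good B)] with x hx
      obtain ⟨n, hn⟩ := B.exists_mem x
      rw [ptNorm_eq _ _ hn, ptNorm_eq _ _ hn, ptNorm_eq _ _ hn]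
      refine min_one_add_min_one ((hx n hn).1 _) ((hx n hn).1 _) ?_
      have hsum : (s.sub u).val n x = (s.sub t).val n x + (t.sub u).val n x := by
        funext i; simp [Sec.sub]
      rw [hsum]
      exact (hx n hn).2.2.2 _ _
    calc secDist B m' s u
        ≤ ∫ x, (min (ptNorm B (s.sub t) x) 1 + min (ptNorm B (t.sub u) x) 1) ∂m' :=
          integral_mono_ae (int_min _) ((int_min _).add (int_min _)) hae
      _ = secDist B m' s t + secDist B m' t u := integral_add (int_min _) (int_min _)
  -- zero distance iff a.e. equality
  have hzero : ∀ s t : Sec B, secDist B m' s t = 0 ↔ Sec.aeeq B s t := by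
    intro s t
    constructor
    · intro h0
      have hae0 : (fun x => min (ptNorm B (s.sub t) x) 1) =ᵐ[m'] 0 :=
        (integral_eq_zero_iff_of_nonneg_ae (nonneg_min _) (int_min _)).mp h0
      intro n
      filter_upwards [aeμ hae0, ae_good B] with x hx hg hxn
      have hnonneg : 0 ≤ ptNorm B (s.sub t) x := by
        rw [ptNorm_eq _ _ hxn]; exact (hg n hxn).1 _
      have hx0 : min (ptNorm B (s.sub t) x) 1 = 0 := hx
      have hpt : ptNorm B (s.sub t) x = 0 := by
        by_contra hne
        have hpos : 0 < ptNorm B (s.sub t) x := lt_of_le_of_ne hnonneg (Ne.symm hne)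
        exact absurd hx0 (ne_of_gt (lt_min hpos one_pos))
      rw [ptNorm_eq _ _ hxn] at hpt
      have := (hg n hxn).2.1 _ hpt
      funext i
      have := congrFun this i
      simpa [Sec.sub, sub_eq_zero] using this
    · intro h
      have hae0 : ∀ᵐ x ∂μ, min (ptNorm B (s.sub t) x) 1 = 0 := by
        filter_upwards [ae_good B, ae_all_iff.mpr h] with x hg hx
        obtain ⟨n, hn⟩ := B.exists_mem x
        rw [ptNorm_eq _ _ hn]
        have hval : (s.sub t).val n x = 0 := by
          funext i
          have := congrFun (hx n hn) i
          simp [Sec.sub, this]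
        rw [hval, (hg n hn).nrm_zero]
        simp
      refine integral_eq_zero_of_ae ?_
      filter_upwards [aem' hae0] with x hx
      simpa using hx
  refine ⟨hsymm, htri, hzero, ?_, ae_ptNorm_nonneg B, ?_, ?_⟩
  · -- completeness
    intro u hc
    have hchoice : ∀ j : ℕ, ∃ N, ∀ p ≥ N, ∀ q ≥ N,
        secDist B m' (u p) (u q) < (1 / 2 : ℝ) ^ j :=
      fun j => hc _ (by positivity)
    choose N hN using hchoice
    set k : ℕ → ℕ := fun j => (Finset.range (j + 1)).sup N with hk
    have hk_ge : ∀ j, N j ≤ k j := fun j =>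
      Finset.le_sup (Finset.self_mem_range_succ j)
    have hk_mono : Monotone k := fun a b hab =>
      Finset.sup_mono (Finset.range_subset_range.mpr (by omega))
    have hdist : ∀ j, secDist B m' (u (k j)) (u (k (j + 1))) < (1 / 2 : ℝ) ^ j := fun j =>
      hN j _ (hk_ge j) _ (le_trans (hk_ge j) (hk_mono (Nat.le_succ j)))
    set dfun : ℕ → X → ℝ := fun j x =>
      min (ptNorm B ((u (k j)).sub (u (k (j + 1)))) x) 1 with hdfun
    -- summability of the distances, pointwise a.e.
    have hGint : ∀ j, ∫⁻ x, ENNReal.ofReal (dfun j x) ∂m' ≤ ENNReal.ofReal ((1 / 2 : ℝ) ^ j) := by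
      intro j
      rw [← ofReal_integral_eq_lintegral_ofReal (int_min _) (nonneg_min _)]
      exact ENNReal.ofReal_le_ofReal (hdist j).le
    have hsum_fin : ∫⁻ x, ∑' j, ENNReal.ofReal (dfun j x) ∂m' < ⊤ := by
      rw [lintegral_tsum fun j => ((meas_min _).ennreal_ofReal).aemeasurable]
      refine lt_of_le_of_lt (ENNReal.tsum_le_tsum hGint) ?_
      have heq : ∀ j : ℕ, ENNReal.ofReal ((1 / 2 : ℝ) ^ j)
          = (ENNReal.ofReal (1 / 2)) ^ j := fun j => ENNReal.ofReal_pow (by norm_num) j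
      simp_rw [heq]
      rw [ENNReal.tsum_geometric]
      refine ENNReal.inv_lt_top.mpr ?_
      rw [tsub_pos_iff_lt]
      exact ENNReal.ofReal_lt_one.mpr (by norm_num)
    have hae_fin : ∀ᵐ x ∂m', ∑' j, ENNReal.ofReal (dfun j x) < ⊤ :=
      ae_lt_top (Measurable.ennreal_tsum fun j => (meas_min _).ennreal_ofReal) hsum_fin.ne
    have hsumm : ∀ᵐ x ∂m', Summable fun j => dfun j x := by
      filter_upwards [hae_fin, ae_all_iff.mpr fun j => nonneg_min
        ((u (k j)).sub (u (k (j + 1))))] with x hx hx0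
      have := ENNReal.summable_toReal hx.ne
      refine this.congr fun j => ?_
      exact ENNReal.toReal_ofReal (hx0 j)
    -- a.e. convergence of the values of the subsequence
    have hconv : ∀ n : ℕ, ∀ᵐ x ∂μ, ∃ l,
        Tendsto (fun j => (B.E n).indicator ((u (k j)).val n) x) atTop (nhds l) := by
      intro n
      filter_upwards [ae_good B, aeμ hsumm] with x hgood hsx
      by_cases hxn : x ∈ B.E n
      · set v : ℕ → Fin n → ℝ := fun j => (u (k j)).val n x with hv
        set a : ℕ → ℝ := fun j => B.nrm n x (v j - v (j + 1)) with ha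
        have hda : ∀ j, dfun j x = min (a j) 1 := by
          intro j
          rw [hdfun]
          simp only
          rw [ptNorm_eq _ _ hxn]
          rfl
        have ha_nonneg : ∀ j, 0 ≤ a j := fun j => (hgood n hxn).1 _
        -- eventually dfun j x = a j, hence a is summable
        have hd0 : Tendsto (fun j => dfun j x) atTop (nhds 0) := hsx.tendsto_atTop_zero
        have hev : ∀ᶠ j in atTop, dfun j x < 1 :=
          hd0.eventually_lt_const one_pos
        obtain ⟨J, hJ⟩ := eventually_atTop.mp hev
        have hsa : Summable a := by
          rw [← summable_nat_add_iff J]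
          refine ((summable_nat_add_iff J).mpr hsx).congr fun j => ?_
          rw [hda]
          refine min_eq_left ?_
          by_contra hlt
          push_neg at hlt
          have : dfun (j + J) x = 1 := by rw [hda, min_eq_right hlt.le]
          have h1 := hJ (j + J) (by omega)
          rw [this] at h1
          exact lt_irrefl _ h1
        obtain ⟨c, hc0, hcle⟩ := (hgood n hxn).lower
        have hsnorm : Summable fun j => ‖v (j + 1) - v j‖ := by
          refine Summable.of_nonneg_of_le (fun j => norm_nonneg _) (fun j => ?_)
            (hsa.mul_left c⁻¹)
          rw [norm_sub_rev]
          calc ‖v j - v (j + 1)‖ = c⁻¹ * (c * ‖v j - v (j + 1)‖) := by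
                field_simp
            _ ≤ c⁻¹ * a j := by
                refine mul_le_mul_of_nonneg_left ?_ (by positivity)
                exact hcle _
        have hsv : Summable fun j => v (j + 1) - v j := Summable.of_norm hsnorm
        refine ⟨(∑' j, (v (j + 1) - v j)) + v 0, ?_⟩
        have htt := hsv.hasSum.tendsto_sum_nat
        have hteq : ∀ m : ℕ, ∑ j ∈ Finset.range m, (v (j + 1) - v j) = v m - v 0 :=
          fun m => Finset.sum_range_sub v m
        rw [show (fun m => ∑ j ∈ Finset.range m, (v (j + 1) - v j)) = fun m => v m - v 0
          from funext hteq] at htt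
        have := htt.add (tendsto_const_nhds (x := v 0))
        simp only [sub_add_cancel] at this
        refine Tendsto.congr (fun j => ?_) this
        exact (Set.indicator_of_mem hxn _).symm
      · exact ⟨0, by simp [Set.indicator_of_notMem hxn]⟩
    choose sv hsvmeas hsvtendsto using fun n =>
      measurable_limit_of_tendsto_metrizable_ae
        (f := fun j x => (B.E n).indicator ((u (k j)).val n) x)
        (fun j => (((u (k j)).meas n).indicator (B.measE n)).aemeasurable) (hconv n)
    set s : Sec B := ⟨sv, hsvmeas⟩ with hs
    -- the subsequence converges to s in secDist
    have hsub0 : Tendsto (fun j => secDist B m' (u (k j)) s) atTop (nhds 0) := by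
      have haeconv : ∀ᵐ x ∂m',
          Tendsto (fun j => min (ptNorm B ((u (k j)).sub s) x) 1) atTop
            (nhds ((fun _ => (0 : ℝ)) x)) := by
        refine aem' ?_
        filter_upwards [ae_good B, ae_all_iff.mpr hsvtendsto] with x hgood htd
        obtain ⟨n, hn⟩ := B.exists_mem x
        have hvt : Tendsto (fun j => (u (k j)).val n x) atTop (nhds (sv n x)) := by
          refine Tendsto.congr (fun j => ?_) (htd n)
          exact Set.indicator_of_mem hn _
        have heq : ∀ j, ptNorm B ((u (k j)).sub s) x
            = B.nrm n x ((u (k j)).val n x - sv n x) := by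
          intro j
          rw [ptNorm_eq _ _ hn]
          rfl
        have h2 : Tendsto (fun j => (u (k j)).val n x - sv n x) atTop (nhds 0) := by
          simpa using hvt.sub (tendsto_const_nhds (x := sv n x))
        have h3 := ((hgood n hn).continuous.tendsto 0).comp h2
        rw [(hgood n hn).nrm_zero] at h3
        have h1 : Tendsto (fun j => ptNorm B ((u (k j)).sub s) x) atTop (nhds 0) := by
          simp only [heq]
          exact h3
        have := h1.min (tendsto_const_nhds (x := (1 : ℝ)))
        simpa using this
      have := tendsto_integral_of_dominated_convergence (fun _ => (1 : ℝ))
        (fun j => (meas_min _).aestronglyMeasurable) (integrable_const 1)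
        (fun j => by
          filter_upwards [nonneg_min ((u (k j)).sub s)] with x hx
          rw [Real.norm_eq_abs, abs_of_nonneg hx]
          exact min_le_right _ _) haeconv
      simpa [secDist] using this
    -- the full sequence converges
    refine ⟨s, ?_⟩
    rw [Metric.tendsto_atTop]
    intro ε hε
    obtain ⟨j₀, hj₀⟩ := exists_pow_lt_of_lt_one (half_pos hε) (by norm_num : (1 / 2 : ℝ) < 1)
    obtain ⟨J, hJ⟩ := Metric.tendsto_atTop.mp hsub0 (ε / 2) (half_pos hε)
    set j₁ := max j₀ J with hj₁
    refine ⟨N j₀, fun m hm => ?_⟩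
    have hk1 : N j₀ ≤ k j₁ := le_trans (hk_ge j₀) (hk_mono (le_max_left _ _))
    have hA : secDist B m' (u m) (u (k j₁)) < ε / 2 :=
      lt_trans (hN j₀ m hm _ hk1) hj₀
    have hB : secDist B m' (u (k j₁)) s < ε / 2 := by
      have := hJ j₁ (le_max_right _ _)
      rw [Real.dist_eq, abs_of_nonneg (by simpa using secDist_nonneg (u (k j₁)) s)] at this
      simpa using this
    have ht := htri (u m) (u (k j₁)) s
    rw [Real.dist_eq, abs_of_nonneg (by simpa using secDist_nonneg (u m) s)]
    simp only [sub_zero]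
    linarith
  · -- pointwise norm is L⁰-homogeneous
    intro g hg s
    filter_upwards [ae_good B] with x hgood
    obtain ⟨n, hn⟩ := B.exists_mem x
    rw [ptNorm_eq _ _ hn, ptNorm_eq _ _ hn]
    have hval : (Sec.smul g hg s).val n x = g x • s.val n x := by
      funext i; simp [Sec.smul]
    rw [hval, (hgood n hn).2.2.1]
  · -- local basis
    intro n
    constructor
    · intro t
      refine Eventually.of_forall fun x hx => ?_
      funext j
      simp only [constSec, Finset.sum_apply, Pi.smul_apply, dif_pos rfl, smul_eq_mul]
      simp [Pi.single_apply, mul_ite]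
    · intro g hg hsum
      filter_upwards [hsum] with x hx hxn
      intro i
      have := congrFun (hx hxn) i
      simpa [constSec, Finset.sum_apply, Pi.single_apply, mul_ite] using this

end L0SerreSwan
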